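/- Let $\sigma \in S_N$ and let $\mathcal{M}(\sigma) = \{(i, \sigma_i) : \sigma_i < \sigma_t \text{ for all } t < i\}$ be the set of left-to-right minima of $\sigma$. Then $\sigma$ is uniquely determined by the set $\mathcal{M}(\sigma)$ together with the pattern (relative order) of the subsequence of $\sigma$ obtained by deleting the entries belonging to $\mathcal{M}(\sigma)$. -/
import Mathlib


/-- Position `i` is a left-to-right minimum of the permutation `σ`. -/
def IsLRMin {N : ℕ} (σ : Equiv.Perm (Fin N)) (i : Fin N) : Prop :=
  ∀ t : Fin N, t < i → σ i < σ t

/-- In a finset of a linear order, an element is determined by the number of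
smaller elements of the finset. -/
lemma eq_of_card_lt_filter_eq {α : Type*} [LinearOrder α] [DecidableEq α]
    (S : Finset α) {a b : α} (ha : a ∈ S) (hb : b ∈ S)
    (h : (S.filter (· < a)).card = (S.filter (· < b)).card) : a = b := by
  classical
  by_contra hne
  have key : ∀ x y : α, x ∈ S → x < y →
      (S.filter (· < x)).card < (S.filter (· < y)).card := by
    intro x y hx hxy
    apply Finset.card_lt_card
    constructor
    · intro z hz
      simp only [Finset.mem_filter] at hz ⊢
      exact ⟨hz.1, lt_trans hz.2 hxy⟩
    · intro hsub
      have : x ∈ S.filter (· < x) := hsub (Finset.mem_filter.2 ⟨hx, hxy⟩)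
      simp at this
  rcases lt_or_gt_of_ne hne with hlt | hlt
  · exact absurd h (Nat.ne_of_lt (key a b ha hlt))
  · exact absurd h.symm (Nat.ne_of_lt (key b a hb hlt))

/-- A permutation is uniquely determined by its set of left-to-right minima
(positions and values) together with the relative order (pattern) of the
remaining entries. -/
theorem perm_determined_by_minima_and_pattern {N : ℕ} (σ τ : Equiv.Perm (Fin N))
    (hpos : ∀ i, IsLRMin σ i ↔ IsLRMin τ i)
    (hval : ∀ i, IsLRMin σ i → σ i = τ i)
    (hpatt : ∀ i j : Fin N, ¬IsLRMin σ i → ¬IsLRMin σ j → (σ i < σ j ↔ τ i < τ j)) :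
    σ = τ := by
  classical
  -- the finset of non-minimum positions
  set P : Finset (Fin N) := Finset.univ.filter (fun j => ¬ IsLRMin σ j) with hP
  set Mf : Finset (Fin N) := Finset.univ.filter (fun j => IsLRMin σ j) with hMf
  -- images of the minima set under σ and τ agree
  have hMimg : Mf.image σ = Mf.image τ := by
    apply Finset.image_congr
    intro i hi
    exact hval i (by simpa [hMf] using hi)
  -- the image of non-minima is the complement of the image of minima
  have hcompl : ∀ (ρ : Equiv.Perm (Fin N)) (pred : Fin N → Prop) [DecidablePred pred],
      (Finset.univ.filter (fun j => ¬ pred j)).image ρ =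
        Finset.univ \ (Finset.univ.filter (fun j => pred j)).image ρ := by
    intro ρ pred _
    ext x
    simp only [Finset.mem_image, Finset.mem_filter, Finset.mem_univ, true_and,
      Finset.mem_sdiff]
    constructor
    · rintro ⟨j, hj, rfl⟩ ⟨k, hk, hkx⟩
      exact hj (by rwa [ρ.injective hkx] at hk)
    · intro hx
      exact ⟨ρ.symm x, fun hmin => hx ⟨ρ.symm x, hmin, by simp⟩, by simp⟩
  -- σ and τ have the same image on non-minima
  have hST : P.image σ = P.image τ := by
    have h1 := hcompl σ (fun j => IsLRMin σ j)
    have h2 := hcompl τ (fun j => IsLRMin τ j)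
    have hfilt : (Finset.univ.filter (fun j => ¬ IsLRMin τ j)) = P := by
      ext j; simp [hP, hpos j]
    have hfilt2 : (Finset.univ.filter (fun j => IsLRMin τ j)) = Mf := by
      ext j; simp [hMf, hpos j]
    rw [hfilt, hfilt2] at h2
    rw [hP, h1, h2, ← hMf, hMimg]
  -- main pointwise argument
  apply Equiv.ext
  intro i
  by_cases hmin : IsLRMin σ i
  · exact hval i hmin
  · have hiP : i ∈ P := by simp [hP, hmin]
    have haS : σ i ∈ P.image σ := Finset.mem_image_of_mem σ hiP
    have hbS : τ i ∈ P.image σ := hST ▸ Finset.mem_image_of_mem τ hiP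
    apply eq_of_card_lt_filter_eq (P.image σ) haS hbS
    -- count smaller elements via positions
    have hσ : (P.image σ).filter (· < σ i) =
        (P.filter (fun j => σ j < σ i)).image σ := by
      ext x
      simp only [Finset.mem_filter, Finset.mem_image]
      constructor
      · rintro ⟨⟨j, hj, rfl⟩, hx⟩; exact ⟨j, ⟨hj, hx⟩, rfl⟩
      · rintro ⟨j, ⟨hj, hx⟩, rfl⟩; exact ⟨⟨j, hj, rfl⟩, hx⟩
    have hτ : (P.image τ).filter (· < τ i) =
        (P.filter (fun j => τ j < τ i)).image τ := by
      ext x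
      simp only [Finset.mem_filter, Finset.mem_image]
      constructor
      · rintro ⟨⟨j, hj, rfl⟩, hx⟩; exact ⟨j, ⟨hj, hx⟩, rfl⟩
      · rintro ⟨j, ⟨hj, hx⟩, rfl⟩; exact ⟨⟨j, hj, rfl⟩, hx⟩
    have hfilteq : P.filter (fun j => σ j < σ i) = P.filter (fun j => τ j < τ i) := by
      ext j
      simp only [Finset.mem_filter, hP, Finset.mem_univ, true_and]
      constructor
      · rintro ⟨hj, hx⟩; exact ⟨hj, (hpatt j i hj hmin).1 hx⟩
      · rintro ⟨hj, hx⟩; exact ⟨hj, (hpatt j i hj hmin).2 hx⟩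
    calc ((P.image σ).filter (· < σ i)).card
        = (P.filter (fun j => σ j < σ i)).card := by
          rw [hσ]; exact Finset.card_image_of_injective _ σ.injective
      _ = (P.filter (fun j => τ j < τ i)).card := by rw [hfilteq]
      _ = ((P.image τ).filter (· < τ i)).card := by
          rw [hτ]; exact (Finset.card_image_of_injective _ τ.injective).symm
      _ = ((P.image σ).filter (· < τ i)).card := by rw [hST]
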